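/- arXiv:2411.00703 — 2 statements merged into one kernel-verified Lean document; each statement's English description precedes it below -/
import Mathlib

section
/- If the extended-state set Ξ ⊆ ℝ^{(m+p)T_ini} is control invariant in the input-output sense (for every reachable extended state ξ(t) ∈ Ξ there exists an admissible input u(t) ∈ U with ξ(t+1) ∈ Ξ), and the observability matrix of depth T_ini is injective, then the set of underlying states X_Ξ = {x_t : ξ(t) ∈ Ξ for some system trajectory} is control invariant for the state dynamics: for every x ∈ X_Ξ there exists u ∈ U with A x + B u ∈ X_Ξ. -/
/-- The extended state at time `t`: the last `T_ini` inputs and outputs. -/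
def xiOf {m p : ℕ} (u : ℕ → Fin m → ℝ) (y : ℕ → Fin p → ℝ) (Tini t : ℕ) :
    (Fin Tini → Fin m → ℝ) × (Fin Tini → Fin p → ℝ) :=
  ((fun i => u (t - Tini + i)), (fun i => y (t - Tini + i)))

/-- If the extended-state set `Ξ` is control invariant in the input-output
sense and the observability matrix of depth `T_ini` is injective, then the set
`X_Ξ` of underlying states compatible with `Ξ` is control invariant for the
state dynamics. -/
theorem io_invariance_implies_state_invariance {n m p Tini : ℕ}
    (hTini : 1 ≤ Tini)
    (A : Matrix (Fin n) (Fin n) ℝ) (B : Matrix (Fin n) (Fin m) ℝ)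
    (C : Matrix (Fin p) (Fin n) ℝ) (D : Matrix (Fin p) (Fin m) ℝ)
    (U : Set (Fin m → ℝ))
    (Ξ : Set ((Fin Tini → Fin m → ℝ) × (Fin Tini → Fin p → ℝ)))
    (hobs : Function.Injective
      (fun v : Fin n → ℝ =>
        fun i : Fin Tini => C.mulVec ((A ^ (i : ℕ)).mulVec v)))
    (hinv : ∀ (x : ℕ → Fin n → ℝ) (u : ℕ → Fin m → ℝ) (y : ℕ → Fin p → ℝ)
      (t : ℕ), Tini ≤ t →
      (∀ k, x (k + 1) = A.mulVec (x k) + B.mulVec (u k) ∧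
        y k = C.mulVec (x k) + D.mulVec (u k)) →
      xiOf u y Tini t ∈ Ξ →
      ∃ ut ∈ U,
        xiOf (Function.update u t ut)
          (Function.update y t (C.mulVec (x t) + D.mulVec ut)) Tini (t + 1)
          ∈ Ξ) :
    ∀ xt ∈ {xt | ∃ (x : ℕ → Fin n → ℝ) (u : ℕ → Fin m → ℝ)
        (y : ℕ → Fin p → ℝ) (t : ℕ), Tini ≤ t ∧
        (∀ k, x (k + 1) = A.mulVec (x k) + B.mulVec (u k) ∧
          y k = C.mulVec (x k) + D.mulVec (u k)) ∧
        xiOf u y Tini t ∈ Ξ ∧ xt = x t},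
      ∃ ut ∈ U, A.mulVec xt + B.mulVec ut ∈
        {xt | ∃ (x : ℕ → Fin n → ℝ) (u : ℕ → Fin m → ℝ)
          (y : ℕ → Fin p → ℝ) (t : ℕ), Tini ≤ t ∧
          (∀ k, x (k + 1) = A.mulVec (x k) + B.mulVec (u k) ∧
            y k = C.mulVec (x k) + D.mulVec (u k)) ∧
          xiOf u y Tini t ∈ Ξ ∧ xt = x t} := by
  rintro xt ⟨x, u, y, t, ht, hdyn, hxi, rfl⟩
  obtain ⟨ut, hutU, hxi'⟩ := hinv x u y t ht hdyn hxi
  refine ⟨ut, hutU, ?_⟩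
  set u' : ℕ → Fin m → ℝ := Function.update u t ut with hu'
  -- new state trajectory: agrees with x up to time t, then follows u'
  let x' : ℕ → Fin n → ℝ := fun k =>
    Nat.rec (x 0) (fun k xk => A.mulVec xk + B.mulVec (u' k)) k
  have hx'succ : ∀ k, x' (k + 1) = A.mulVec (x' k) + B.mulVec (u' k) :=
    fun k => rfl
  have hagree : ∀ k, k ≤ t → x' k = x k := by
    intro k hk
    induction k with
    | zero => rfl
    | succ k ih =>
      have hklt : k < t := Nat.lt_of_succ_le hk
      have huk : u' k = u k := Function.update_of_ne (Nat.ne_of_lt hklt) _ _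
      rw [hx'succ, ih (Nat.le_of_lt hklt), huk, (hdyn k).1]
  let y' : ℕ → Fin p → ℝ := fun k => C.mulVec (x' k) + D.mulVec (u' k)
  refine ⟨x', u', y', t + 1, le_trans ht (Nat.le_succ t),
    fun k => ⟨hx'succ k, rfl⟩, ?_, ?_⟩
  · -- xiOf u' y' at t+1 equals the updated xi from hinv
    have hy : ∀ k, k ≤ t →
        y' k = Function.update y t (C.mulVec (x t) + D.mulVec ut) k := by
      intro k hk
      rcases eq_or_lt_of_le hk with rfl | hk
      · show C.mulVec (x' k) + D.mulVec (u' k) = _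
        rw [hagree k le_rfl, hu', Function.update_self, Function.update_self]
      · show C.mulVec (x' k) + D.mulVec (u' k) = _
        rw [hagree k (Nat.le_of_lt hk), hu',
          Function.update_of_ne (Nat.ne_of_lt hk),
          Function.update_of_ne (Nat.ne_of_lt hk), (hdyn k).2]
    have : xiOf u' y' Tini (t + 1) =
        xiOf u' (Function.update y t (C.mulVec (x t) + D.mulVec ut)) Tini
          (t + 1) := by
      unfold xiOf
      refine Prod.ext rfl ?_
      funext i
      refine hy _ ?_
      have hi : (i : ℕ) ≤ Tini - 1 := Nat.le_pred_of_lt i.2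
      have : t + 1 - Tini + (i : ℕ) ≤ t + 1 - Tini + (Tini - 1) :=
        Nat.add_le_add_left hi _
      refine le_trans this ?_
      omega
    rw [this]
    exact hxi'
  · rw [hx'succ, hagree t le_rfl, hu', Function.update_self]
end

section
/- Suppose Ξ⁰ ⊆ Ξ¹ ⊆ ⋯ ⊆ Ξ^{n*} ⊆ ℝ^d are nested sets with the N-step reachability property: for every l ∈ {1,…,n*} and every ξ ∈ Ξ^l there exist an admissible control sequence and a time t ∈ {1,…,N} such that the resulting extended-state trajectory starting at ξ satisfies ξ_t ∈ Ξ^{l−1} and ξ_s ∈ Ξ^l for all 0 ≤ s ≤ t. If Ξ⁰ is an invariant equilibrium set (from each ξ ∈ Ξ⁰ some admissible control keeps the successor in Ξ⁰), then from any ξ₀ ∈ Ξ^l there exists an admissible control sequence whose trajectory reaches Ξ⁰ within l·N steps and remains in Ξ^l ∪ ⋯ ∪ Ξ⁰ ⊆ Ξ^l at all times. -/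
/-- From an invariant set one can build an infinite admissible trajectory
staying in the set. -/
lemma invariant_infinite_traj {d m : ℕ}
    (F : (Fin d → ℝ) → (Fin m → ℝ) → Set (Fin d → ℝ))
    (U : Set (Fin m → ℝ)) (S : Set (Fin d → ℝ))
    (hinv : ∀ ξ0 ∈ S, ∃ u ∈ U, ∃ ξ' ∈ F ξ0 u, ξ' ∈ S) :
    ∀ ξ0 ∈ S, ∃ (ξ : ℕ → Fin d → ℝ) (u : ℕ → Fin m → ℝ), ξ 0 = ξ0 ∧
      (∀ k, u k ∈ U ∧ ξ (k + 1) ∈ F (ξ k) (u k)) ∧ ∀ k, ξ k ∈ S := by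
  intro ξ0 h0
  have step : ∀ p : {x // x ∈ S},
      ∃ q : {x // x ∈ S} × (Fin m → ℝ), q.2 ∈ U ∧ (q.1 : Fin d → ℝ) ∈ F p q.2 := by
    rintro ⟨x, hx⟩
    obtain ⟨u, hu, ξ', hξ', hS⟩ := hinv x hx
    exact ⟨⟨⟨ξ', hS⟩, u⟩, hu, hξ'⟩
  choose nx hnxU hnxF using step
  let g : ℕ → {x // x ∈ S} := fun k => Nat.rec ⟨ξ0, h0⟩ (fun _ p => (nx p).1) k
  exact ⟨fun k => (g k).1, fun k => (nx (g k)).2, rfl,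
    fun k => ⟨hnxU (g k), hnxF (g k)⟩, fun k => (g k).2⟩

/-- Recursive feasibility and finite-time convergence of the set-theoretic
controller for an abstract transition system `ξ' ∈ F(ξ, u)`: if each `Ξ^l` has
the `N`-step backward reachability property towards `Ξ^{l−1}` and `Ξ⁰` is an
invariant equilibrium set, then from any `ξ₀ ∈ Ξ^l` there is an admissible
control sequence whose trajectory reaches `Ξ⁰` within `l·N` steps and remains
in `Ξ^l` at all times. -/
theorem set_theoretic_recursive_feasibility {d m : ℕ}
    (F : (Fin d → ℝ) → (Fin m → ℝ) → Set (Fin d → ℝ))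
    (U : Set (Fin m → ℝ)) (nstar N : ℕ) (Ξ : ℕ → Set (Fin d → ℝ))
    (hN : 1 ≤ N)
    (hnested : ∀ l, 1 ≤ l → l ≤ nstar → Ξ (l - 1) ⊆ Ξ l)
    (hreach : ∀ l, 1 ≤ l → l ≤ nstar → ∀ ξ0 ∈ Ξ l,
      ∃ (ξ : ℕ → Fin d → ℝ) (u : ℕ → Fin m → ℝ), ξ 0 = ξ0 ∧
        (∀ k, u k ∈ U ∧ ξ (k + 1) ∈ F (ξ k) (u k)) ∧
        ∃ t, 1 ≤ t ∧ t ≤ N ∧ ξ t ∈ Ξ (l - 1) ∧ ∀ s ≤ t, ξ s ∈ Ξ l)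
    (hinv0 : ∀ ξ0 ∈ Ξ 0, ∃ u ∈ U, ∃ ξ' ∈ F ξ0 u, ξ' ∈ Ξ 0) :
    ∀ l, l ≤ nstar → ∀ ξ0 ∈ Ξ l,
      ∃ (ξ : ℕ → Fin d → ℝ) (u : ℕ → Fin m → ℝ), ξ 0 = ξ0 ∧
        (∀ k, u k ∈ U ∧ ξ (k + 1) ∈ F (ξ k) (u k)) ∧
        (∃ t, t ≤ l * N ∧ ξ t ∈ Ξ 0) ∧
        (∀ k, ξ k ∈ Ξ l) := by
  intro l
  induction l with
  | zero =>
    intro _ ξ0 h0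
    obtain ⟨ξ, u, hξ0, hstep, hmem⟩ := invariant_infinite_traj F U (Ξ 0) hinv0 ξ0 h0
    exact ⟨ξ, u, hξ0, hstep, ⟨0, by simp, hξ0 ▸ h0⟩, hmem⟩
  | succ l ih =>
    intro hle ξ0 h0
    have h1 : 1 ≤ l + 1 := Nat.le_add_left 1 l
    obtain ⟨ξ1, u1, hξ10, hstep1, t, ht1, htN, htmem, hall⟩ :=
      hreach (l + 1) h1 hle ξ0 h0
    simp only [Nat.add_sub_cancel] at htmem
    obtain ⟨ξ2, u2, hξ20, hstep2, ⟨t2, ht2, ht2mem⟩, hmem2⟩ :=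
      ih (Nat.le_of_succ_le hle) (ξ1 t) htmem
    have hsub : Ξ l ⊆ Ξ (l + 1) := by
      have := hnested (l + 1) h1 hle
      simpa using this
    refine ⟨fun k => if k ≤ t then ξ1 k else ξ2 (k - t),
            fun k => if k < t then u1 k else u2 (k - t), by simp [hξ10], ?_, ?_, ?_⟩
    · intro k
      by_cases hk : k + 1 ≤ t
      · have hk' : k ≤ t := Nat.le_of_succ_le hk
        simp only [hk, hk', if_pos, if_pos (Nat.lt_of_succ_le hk)]
        exact hstep1 k
      · have hkt : t ≤ k := by omega
        have h1' : ¬ (k + 1 ≤ t) := hk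
        have hidx : k + 1 - t = (k - t) + 1 := by omega
        simp only [if_neg h1', if_neg (by omega : ¬ k < t), hidx]
        by_cases hkt' : k ≤ t
        · have : k = t := le_antisymm hkt' hkt
          subst this
          simp only [if_pos le_rfl, Nat.sub_self]
          have := (hstep2 0).2
          rw [hξ20] at this
          exact ⟨(hstep2 0).1, this⟩
        · simp only [if_neg hkt']
          exact hstep2 (k - t)
    · refine ⟨t + t2, by
        have h' : t + t2 ≤ N + l * N := Nat.add_le_add htN ht2
        have h'' : (l + 1) * N = l * N + N := Nat.succ_mul l N
        omega, ?_⟩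
      by_cases h : t + t2 ≤ t
      · have : t2 = 0 := by omega
        subst this
        simpa [h] using hξ20 ▸ ht2mem
      · have : t + t2 - t = t2 := by omega
        simp [h, this, ht2mem]
    · intro k
      by_cases hk : k ≤ t
      · simpa [hk] using hall k hk
      · simp only [if_neg hk]
        exact hsub (hmem2 (k - t))
end
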